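/- For every positive integer m and real z, the m-th derivative with respect to t of t^{β-1} E_{α,β}^γ(t^α z) equals t^{β-m-1} E_{α,β-m}^γ(t^α z) for t > 0, with α > 0 and β real. -/

import Mathlib

open scoped BigOperators

/-- Pochhammer symbol `(γ)_k = γ(γ+1)⋯(γ+k-1)`. -/
noncomputable def poch (γ : ℝ) (k : ℕ) : ℝ := ∏ i ∈ Finset.range k, (γ + i)

/-- The real-argument Prabhakar function `E_{α,β}^γ(x)`. -/
noncomputable def prabhakarR (α β γ : ℝ) (x : ℝ) : ℝ :=
  ∑' k : ℕ, poch γ k * x ^ k / (Nat.factorial k * Real.Gamma (α * k + β))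

open Real Filter Set


lemma gamma_div_aux (x : ℝ) : x / Real.Gamma (x + 1) = 1 / Real.Gamma x := by
  rcases eq_or_ne x 0 with rfl | hx
  · simp [Real.Gamma_zero]
  · rw [Real.Gamma_add_one hx]
    rcases eq_or_ne (Real.Gamma x) 0 with h | h
    · simp [h]
    · field_simp

lemma exists_gamma_lb : ∃ c : ℝ, 0 < c ∧ ∀ y : ℝ, 2 ≤ y →
    c * (Nat.factorial (Nat.floor y - 1)) ≤ Real.Gamma y := by
  have hcont : ContinuousOn Real.Gamma (Icc (1:ℝ) 2) := fun x hx => by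
    refine (Real.differentiableAt_Gamma fun m => ?_).continuousAt.continuousWithinAt
    have : (0:ℝ) < x := lt_of_lt_of_le one_pos hx.1
    intro h; rw [h] at this; have := neg_nonpos.mpr (Nat.cast_nonneg (α := ℝ) m); linarith
  obtain ⟨x₀, hx₀, hmin⟩ := (isCompact_Icc (a := (1:ℝ)) (b := 2)).exists_isMinOn
    (nonempty_Icc.2 one_le_two) hcont
  set c := Real.Gamma x₀ with hc
  have hcpos : 0 < c := Real.Gamma_pos_of_pos (lt_of_lt_of_le one_pos hx₀.1)
  have key : ∀ n : ℕ, ∀ x ∈ Icc (1:ℝ) 2, c * (Nat.factorial n) ≤ Real.Gamma (x + n) := by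
    intro n
    induction n with
    | zero => intro x hx; simpa using hmin hx
    | succ n ih =>
      intro x hx
      have hxn : (x + n) ≠ 0 := by have := hx.1; positivity
      have : Real.Gamma (x + (n+1)) = (x + n) * Real.Gamma (x + n) := by
        rw [show x + ((n:ℝ)+1) = (x + n) + 1 by ring, Real.Gamma_add_one hxn]
      rw [Nat.cast_add, Nat.cast_one, this]
      have h1 : ((n:ℝ) + 1) ≤ x + n := by have := hx.1; linarith
      have h2 : c * (Nat.factorial n) ≤ Real.Gamma (x + n) := ih x hx
      calc c * ((Nat.factorial (n+1) : ℕ) : ℝ)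
          = ((n:ℝ)+1) * (c * Nat.factorial n) := by
            push_cast [Nat.factorial_succ]; ring
        _ ≤ (x + n) * Real.Gamma (x + n) := by
            apply mul_le_mul h1 h2 (by positivity) (by linarith)
  refine ⟨c, hcpos, fun y hy => ?_⟩
  have hy0 : (0:ℝ) ≤ y := by linarith
  have hfl2 : 2 ≤ Nat.floor y := Nat.le_floor (by exact_mod_cast hy)
  set n : ℕ := Nat.floor y - 1 with hn
  have hncast : (n : ℝ) = (Nat.floor y : ℝ) - 1 := by
    have : (1:ℕ) ≤ Nat.floor y := le_trans one_le_two hfl2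
    push_cast [hn, this]; ring
  have hx1 : (1:ℝ) ≤ y - n := by
    have := Nat.floor_le hy0; rw [hncast]; linarith
  have hx2 : y - n ≤ 2 := by
    have := Nat.lt_floor_add_one y; rw [hncast]; linarith
  have := key n (y - n) ⟨hx1, hx2⟩
  simpa using this

lemma summable_pow_div_fact_div (B : ℝ) (hB : 0 ≤ B) (q : ℕ) (hq : 0 < q) :
    Summable fun k : ℕ => B ^ k / (Nat.factorial (k / q) : ℝ) := by
  haveI : NeZero q := ⟨hq.ne'⟩
  rw [← (Nat.divModEquiv q).symm.summable_iff]
  set C := max 1 B with hC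
  have hC1 : 1 ≤ C := le_max_left _ _
  have hBC : B ≤ C := le_max_right _ _
  have hf : Summable (fun j : ℕ => C ^ q * (C ^ q) ^ j / (Nat.factorial j : ℝ)) := by
    have := (Real.summable_pow_div_factorial (C ^ q)).mul_left (C ^ q)
    simpa [mul_div_assoc] using this
  have hg : Summable (fun _ : Fin q => (1:ℝ)) := summable_of_finite_support (Set.toFinite _)
  have hf0 : 0 ≤ (fun j : ℕ => C ^ q * (C ^ q) ^ j / (Nat.factorial j : ℝ)) := by
    intro j
    have h0 : (0:ℝ) < Nat.factorial j := by exact_mod_cast Nat.factorial_pos j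
    have hC0 : (0:ℝ) ≤ C := le_trans zero_le_one hC1
    positivity
  have hg0 : 0 ≤ (fun _ : Fin q => (1:ℝ)) := fun _ => zero_le_one
  have hsum := hf.mul_of_nonneg hg hf0 hg0
  apply Summable.of_nonneg_of_le _ _ hsum
  · intro p
    simp only [Function.comp_apply]
    have h0 : (0:ℝ) < Nat.factorial ((((Nat.divModEquiv q).symm p) : ℕ) / q) := by
      exact_mod_cast Nat.factorial_pos _
    positivity
  · intro p
    obtain ⟨j, r⟩ := p
    have hk : ((Nat.divModEquiv q).symm (j, r) : ℕ) = j * q + (r : ℕ) := rfl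
    have hdiv : (j * q + (r : ℕ)) / q = j := by
      rw [Nat.add_comm, Nat.add_mul_div_right _ _ hq, Nat.div_eq_of_lt r.isLt, Nat.zero_add]
    simp only [Function.comp_apply, hk, hdiv, mul_one]
    have h1 : B ^ (j * q + (r:ℕ)) ≤ C ^ (q + q * j) := by
      calc B ^ (j * q + (r:ℕ)) ≤ C ^ (j * q + (r:ℕ)) := pow_le_pow_left₀ hB hBC _
        _ ≤ C ^ (q + q * j) := pow_le_pow_right₀ hC1 (by have := r.isLt; rw [Nat.mul_comm]; omega)
    have h2 : C ^ (q + q * j) = C ^ q * (C ^ q) ^ j := by rw [pow_add, pow_mul]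
    have h0 : (0:ℝ) < Nat.factorial j := by exact_mod_cast Nat.factorial_pos j
    calc B ^ (j * q + (r:ℕ)) / (Nat.factorial j : ℝ)
        ≤ C ^ (q + q * j) / (Nat.factorial j : ℝ) := by gcongr
      _ = C ^ q * (C ^ q) ^ j / (Nat.factorial j : ℝ) := by rw [h2]

lemma summable_pow_div_gamma (α b B : ℝ) (hα : 0 < α) (hB : 0 ≤ B) :
    Summable fun k : ℕ => B ^ k / |Real.Gamma (α * k + b)| := by
  obtain ⟨c, hc, hgb⟩ := exists_gamma_lb
  set q : ℕ := Nat.ceil (2 / α) with hqdef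
  have hq0 : 0 < q := Nat.ceil_pos.2 (by positivity)
  have hqα : 2 / α ≤ (q : ℝ) := Nat.le_ceil _
  have hKey : ∀ k : ℕ, (4 - 2*b) / α ≤ (k:ℝ) →
      B ^ k / |Real.Gamma (α * k + b)| ≤ c⁻¹ * (B ^ k / (Nat.factorial (k / q) : ℝ)) := by
    intro k hk
    have hαk : 4 - 2*b ≤ α * k := by
      rw [div_le_iff₀ hα] at hk; linarith [hk]
    have hy2 : 2 ≤ α * k + b := by nlinarith
    have hy0 : (0:ℝ) < α * k + b := by linarith
    have hΓpos : 0 < Real.Gamma (α * k + b) := Real.Gamma_pos_of_pos hy0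
    have hfl : c * (Nat.factorial (Nat.floor (α * k + b) - 1)) ≤ Real.Gamma (α * k + b) :=
      hgb _ hy2
    -- k / q ≤ Nat.floor (α*k+b) - 1
    have hdivle : (k / q : ℕ) ≤ Nat.floor (α * k + b) - 1 := by
      have h1 : ((k / q : ℕ) : ℝ) ≤ (k : ℝ) / q := Nat.cast_div_le
      have h2 : (k : ℝ) / q ≤ α * k / 2 := by
        rw [div_le_div_iff₀ (by exact_mod_cast hq0) two_pos]
        have : 2 / α ≤ (q:ℝ) := hqα
        rw [div_le_iff₀ hα] at this
        nlinarith [Nat.cast_nonneg (α := ℝ) k]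
      have h3 : α * k / 2 ≤ α * k + b - 2 := by nlinarith
      have h4 : (α * k + b) - 2 < ((Nat.floor (α * k + b) : ℝ)) - 1 := by
        have := Nat.lt_floor_add_one (α * k + b); linarith
      have hfl2 : 2 ≤ Nat.floor (α * k + b) := Nat.le_floor (by exact_mod_cast hy2)
      have h5 : ((k / q : ℕ) : ℝ) < ((Nat.floor (α * k + b) - 1 : ℕ) : ℝ) := by
        have hcast : ((Nat.floor (α * k + b) - 1 : ℕ) : ℝ) = (Nat.floor (α * k + b) : ℝ) - 1 := by
          have : (1:ℕ) ≤ Nat.floor (α * k + b) := le_trans one_le_two hfl2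
          push_cast [this]; ring
        rw [hcast]; linarith
      exact_mod_cast h5.le
    have hfact : (Nat.factorial (k / q) : ℝ) ≤ (Nat.factorial (Nat.floor (α * k + b) - 1) : ℝ) := by
      exact_mod_cast Nat.factorial_le hdivle
    have hfd : c * (Nat.factorial (k / q) : ℝ) ≤ Real.Gamma (α * k + b) := by
      calc c * (Nat.factorial (k / q) : ℝ) ≤ c * (Nat.factorial (Nat.floor (α * k + b) - 1) : ℝ) := by
            exact mul_le_mul_of_nonneg_left hfact hc.le
        _ ≤ Real.Gamma (α * k + b) := hfl
    rw [abs_of_pos hΓpos]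
    have hfq : (0:ℝ) < Nat.factorial (k / q) := by exact_mod_cast Nat.factorial_pos _
    calc B ^ k / Real.Gamma (α * k + b) ≤ B ^ k / (c * (Nat.factorial (k / q) : ℝ)) := by
          exact div_le_div_of_nonneg_left (by positivity) (by positivity) hfd
      _ = c⁻¹ * (B ^ k / (Nat.factorial (k / q) : ℝ)) := by
          rw [mul_comm c, ← div_div, inv_mul_eq_div]
  set K : ℕ := Nat.ceil ((4 - 2*b)/α) with hK
  rw [← summable_nat_add_iff K]
  have hbound : Summable fun k : ℕ => c⁻¹ * (B ^ (k + K) / (Nat.factorial ((k + K) / q) : ℝ)) :=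
    ((summable_nat_add_iff K).2 (summable_pow_div_fact_div B hB q hq0)).mul_left _
  apply Summable.of_nonneg_of_le
    (fun k => div_nonneg (pow_nonneg hB _) (abs_nonneg _)) (fun k => ?_) hbound
  apply hKey
  calc (4 - 2*b)/α ≤ (K : ℝ) := Nat.le_ceil _
    _ ≤ ((k + K : ℕ) : ℝ) := by exact_mod_cast Nat.le_add_left K k

lemma prabhakar_tsum_repr (α β γ z : ℝ) (s : ℝ) (hs : 0 < s) :
    s ^ (β - 1) * prabhakarR α β γ (s ^ α * z)
      = ∑' k : ℕ, (poch γ k * z ^ k / (Nat.factorial k * Real.Gamma (α * k + β)))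
          * s ^ (α * k + β - 1) := by
  rw [prabhakarR, ← tsum_mul_left]
  refine tsum_congr fun k => ?_
  have h1 : (s ^ α * z) ^ k = s ^ (α * k) * z ^ k := by
    rw [mul_pow, ← Real.rpow_natCast (s ^ α) k, ← Real.rpow_mul hs.le]
  have h2 : s ^ (α * k + β - 1) = s ^ (α * k) * s ^ (β - 1) := by
    rw [← Real.rpow_add hs]; ring_nf
  rw [h1, h2]; ring

lemma poch_abs_le (γ : ℝ) (k : ℕ) :
    |poch γ k| ≤ (|γ| + 1) ^ k * Nat.factorial k := by
  rw [poch, Finset.abs_prod]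
  have h : ∀ i ∈ Finset.range k, |γ + (i:ℝ)| ≤ (|γ| + 1) * ((i:ℝ) + 1) := by
    intro i _
    have h1 : |γ + (i:ℝ)| ≤ |γ| + i := by
      calc |γ + (i:ℝ)| ≤ |γ| + |(i:ℝ)| := abs_add_le _ _
        _ = |γ| + i := by rw [abs_of_nonneg (α := ℝ) (Nat.cast_nonneg i)]
    have h2 : (0:ℝ) ≤ |γ| := abs_nonneg _
    nlinarith [Nat.cast_nonneg (α := ℝ) i]
  calc ∏ i ∈ Finset.range k, |γ + (i:ℝ)|
      ≤ ∏ i ∈ Finset.range k, ((|γ| + 1) * ((i:ℝ) + 1)) :=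
        Finset.prod_le_prod (fun i _ => abs_nonneg _) h
    _ = (|γ| + 1) ^ k * Nat.factorial k := by
        rw [Finset.prod_mul_distrib, Finset.prod_const, Finset.card_range]
        congr 1
        push_cast [← Finset.prod_range_add_one_eq_factorial]
        rfl

lemma prabhakar_coeff_summable (α b γ z R : ℝ) (hα : 0 < α) (hR : 0 ≤ R) :
    Summable fun k : ℕ =>
      |poch γ k * z ^ k / (Nat.factorial k * Real.Gamma (α * k + b))| * R ^ (α * k) := by
  have hcore := summable_pow_div_gamma α b ((|γ| + 1) * |z| * R ^ α) hα (by positivity)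
  apply Summable.of_nonneg_of_le
    (fun k => mul_nonneg (abs_nonneg _) (Real.rpow_nonneg hR _)) (fun k => ?_) hcore
  have hRk : R ^ (α * (k:ℕ)) = (R ^ α) ^ k := by
    rw [← Real.rpow_natCast (R ^ α) k, ← Real.rpow_mul hR]
  have hfk : (0:ℝ) < Nat.factorial k := by exact_mod_cast Nat.factorial_pos k
  set G := |Real.Gamma (α * k + b)| with hG
  have habs : |(Nat.factorial k : ℝ) * Real.Gamma (α * k + b)| = (Nat.factorial k : ℝ) * G := by
    rw [abs_mul, abs_of_pos hfk]
  rw [abs_div, abs_mul, abs_pow, habs, hRk]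
  have key : |poch γ k| * |z| ^ k / ((Nat.factorial k : ℝ) * G) * (R ^ α) ^ k
      ≤ ((|γ| + 1) ^ k * (Nat.factorial k : ℝ)) * |z| ^ k / ((Nat.factorial k : ℝ) * G) * (R ^ α) ^ k := by
    apply mul_le_mul_of_nonneg_right _ (by positivity)
    apply div_le_div_of_nonneg_right _ (by positivity)
    exact mul_le_mul_of_nonneg_right (poch_abs_le γ k) (by positivity)
  refine key.trans (le_of_eq ?_)
  have hA : ((|γ| + 1) * |z| * R ^ α) ^ k = (|γ| + 1) ^ k * |z| ^ k * (R ^ α) ^ k := by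
    rw [mul_pow, mul_pow]
  rw [hA]
  rw [show ((|γ| + 1) ^ k * (Nat.factorial k : ℝ)) * |z| ^ k / ((Nat.factorial k : ℝ) * G) * (R ^ α) ^ k
      = (Nat.factorial k : ℝ) * ((|γ| + 1) ^ k * |z| ^ k * (R ^ α) ^ k) / ((Nat.factorial k : ℝ) * G)
      from by ring]
  rw [mul_div_mul_left _ _ (ne_of_gt hfk)]

lemma prabhakar_hasDerivAt (α β γ z : ℝ) (hα : 0 < α) (t : ℝ) (ht : 0 < t) :
    HasDerivAt (fun s : ℝ => s ^ (β - 1) * prabhakarR α β γ (s ^ α * z))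
      (t ^ ((β - 1) - 1) * prabhakarR α (β - 1) γ (t ^ α * z)) t := by
  set a : ℕ → ℝ := fun k => poch γ k * z ^ k / (Nat.factorial k * Real.Gamma (α * k + β)) with ha
  set a' : ℕ → ℝ :=
    fun k => poch γ k * z ^ k / (Nat.factorial k * Real.Gamma (α * k + (β - 1))) with ha'
  set g : ℕ → ℝ → ℝ := fun k s => a k * s ^ (α * k + β - 1) with hgdef
  set g' : ℕ → ℝ → ℝ := fun k s => a' k * s ^ (α * k + (β - 1) - 1) with hg'def
  set S : Set ℝ := Ioo (t / 2) (2 * t) with hSdef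
  have ht2 : (0:ℝ) < t / 2 := by positivity
  have hcoeff : ∀ k : ℕ, a k * (α * k + β - 1) = a' k := by
    intro k
    have hx := gamma_div_aux (α * k + β - 1)
    rw [show (α * (k:ℝ) + β - 1) + 1 = α * k + β from by ring] at hx
    show poch γ k * z ^ k / (Nat.factorial k * Real.Gamma (α * k + β)) * (α * k + β - 1)
        = poch γ k * z ^ k / (Nat.factorial k * Real.Gamma (α * k + (β - 1)))
    rw [show α * (k:ℝ) + (β - 1) = α * k + β - 1 from by ring]
    have e1 : poch γ k * z ^ k / ((Nat.factorial k : ℝ) * Real.Gamma (α * k + β)) * (α * k + β - 1)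
        = (poch γ k * z ^ k / (Nat.factorial k : ℝ))
            * ((α * k + β - 1) / Real.Gamma (α * k + β)) := by
      rw [div_mul_div_comm, div_mul_eq_mul_div]
    rw [e1, hx, div_mul_div_comm, mul_one]
  have hg : ∀ (k : ℕ), ∀ y ∈ S, HasDerivAt (g k) (g' k y) y := by
    intro k y hy
    have hy0 : 0 < y := lt_trans ht2 hy.1
    have hd := (Real.hasDerivAt_rpow_const
      (x := y) (p := α * k + β - 1) (Or.inl hy0.ne')).const_mul (a k)
    refine hd.congr_deriv ?_; symm
    show a' k * y ^ (α * (k:ℝ) + (β - 1) - 1) = a k * ((α * k + β - 1) * y ^ (α * k + β - 1 - 1))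
    rw [← hcoeff k, show α * (k:ℝ) + (β - 1) - 1 = α * k + β - 1 - 1 from by ring]
    ring
  set C : ℝ := (t / 2) ^ (β - 2) + (2 * t) ^ (β - 2) with hCdef
  set u : ℕ → ℝ := fun k => |a' k| * (2 * t) ^ (α * k) * C with hudef
  have hu : Summable u :=
    (prabhakar_coeff_summable α (β - 1) γ z (2 * t) hα (by positivity)).mul_right C
  have hub : ∀ (k : ℕ), ∀ y ∈ S, ‖g' k y‖ ≤ u k := by
    intro k y hy
    have hy0 : 0 < y := lt_trans ht2 hy.1
    have h1 : ‖g' k y‖ = |a' k| * y ^ (α * k + (β - 1) - 1) := by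
      rw [Real.norm_eq_abs, abs_mul, abs_of_pos (Real.rpow_pos_of_pos hy0 _)]
    rw [h1, show α * (k:ℝ) + (β - 1) - 1 = α * k + (β - 2) from by ring, Real.rpow_add hy0]
    have h2 : y ^ (α * (k:ℕ)) ≤ (2 * t) ^ (α * (k:ℕ)) :=
      Real.rpow_le_rpow hy0.le hy.2.le (by positivity)
    have h3 : y ^ (β - 2) ≤ C := by
      rcases le_or_gt 0 (β - 2) with h | h
      · have h5 := Real.rpow_le_rpow hy0.le hy.2.le h
        have h4 : (0:ℝ) ≤ (t / 2) ^ (β - 2) := Real.rpow_nonneg ht2.le _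
        rw [hCdef]; linarith
      · have h5 := Real.rpow_le_rpow_of_nonpos ht2 hy.1.le h.le
        have h4 : (0:ℝ) ≤ (2 * t) ^ (β - 2) := Real.rpow_nonneg (by positivity) _
        rw [hCdef]; linarith
    calc |a' k| * (y ^ (α * (k:ℕ)) * y ^ (β - 2))
        ≤ |a' k| * ((2 * t) ^ (α * (k:ℕ)) * C) := by
          apply mul_le_mul_of_nonneg_left _ (abs_nonneg _)
          exact mul_le_mul h2 h3 (Real.rpow_nonneg hy0.le _) (Real.rpow_nonneg (by positivity) _)
      _ = u k := by rw [hudef]; ring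
  have hg0 : Summable fun k => g k t := by
    apply Summable.of_norm
    have hb := (prabhakar_coeff_summable α β γ z t hα ht.le).mul_right (t ^ (β - 1))
    apply Summable.of_nonneg_of_le (fun k => norm_nonneg _) (fun k => ?_) hb
    have h1 : ‖g k t‖ = |a k| * t ^ (α * k + β - 1) := by
      rw [Real.norm_eq_abs, abs_mul, abs_of_pos (Real.rpow_pos_of_pos ht _)]
    rw [h1, show α * (k:ℝ) + β - 1 = α * k + (β - 1) from by ring, Real.rpow_add ht]
    exact le_of_eq (by ring)
  have htS : t ∈ S := ⟨by linarith, by linarith⟩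
  have main := hasDerivAt_tsum_of_isPreconnected hu isOpen_Ioo isPreconnected_Ioo
    hg hub htS hg0 htS
  have hfun : (fun s : ℝ => s ^ (β - 1) * prabhakarR α β γ (s ^ α * z))
      =ᶠ[nhds t] fun y => ∑' k, g k y := by
    filter_upwards [isOpen_Ioi.mem_nhds (show t ∈ Ioi (0:ℝ) from ht)] with s hs
    exact prabhakar_tsum_repr α β γ z s hs
  have hval : t ^ ((β - 1) - 1) * prabhakarR α (β - 1) γ (t ^ α * z) = ∑' k, g' k t :=
    prabhakar_tsum_repr α (β - 1) γ z t ht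
  rw [hval]
  exact main.congr_of_eventuallyEq hfun

lemma iteratedDeriv_congr_nhds {f g : ℝ → ℝ} {t : ℝ} (n : ℕ) (h : f =ᶠ[nhds t] g) :
    iteratedDeriv n f t = iteratedDeriv n g t := by
  induction n generalizing f g with
  | zero => simpa using h.eq_of_nhds
  | succ n ih => rw [iteratedDeriv_succ', iteratedDeriv_succ']; exact ih h.deriv

lemma prabhakar_iter (α γ z : ℝ) (hα : 0 < α) (n : ℕ) :
    ∀ β t : ℝ, 0 < t →
    iteratedDeriv (n + 1) (fun s : ℝ => s ^ (β - 1) * prabhakarR α β γ (s ^ α * z)) t =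
      t ^ (β - (n + 1 : ℕ) - 1) * prabhakarR α (β - (n + 1 : ℕ)) γ (t ^ α * z) := by
  induction n with
  | zero =>
    intro β t ht
    rw [iteratedDeriv_one, (prabhakar_hasDerivAt α β γ z hα t ht).deriv]
    norm_num
  | succ n ih =>
    intro β t ht
    rw [iteratedDeriv_succ']
    have hder : (deriv fun s : ℝ => s ^ (β - 1) * prabhakarR α β γ (s ^ α * z))
        =ᶠ[nhds t] fun s : ℝ => s ^ ((β - 1) - 1) * prabhakarR α (β - 1) γ (s ^ α * z) := by
      filter_upwards [isOpen_Ioi.mem_nhds (show t ∈ Ioi (0:ℝ) from ht)] with s hs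
      exact (prabhakar_hasDerivAt α β γ z hα s hs).deriv
    rw [iteratedDeriv_congr_nhds (n + 1) hder, ih (β - 1) t ht]
    have h1 : β - 1 - ((n : ℝ) + 1) = β - ((n : ℝ) + 1 + 1) := by ring
    push_cast
    rw [h1]


/-- For every positive integer `m` and real `z`,
`(d/dt)^m [t^{β-1} E_{α,β}^γ(t^α z)] = t^{β-m-1} E_{α,β-m}^γ(t^α z)` for `t > 0`. -/
theorem prabhakar_kernel_iteratedDeriv (α β γ z : ℝ) (hα : 0 < α) (m : ℕ) (hm : 0 < m)
    (t : ℝ) (ht : 0 < t) :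
    iteratedDeriv m (fun s : ℝ => s ^ (β - 1) * prabhakarR α β γ (s ^ α * z)) t =
      t ^ (β - (m : ℝ) - 1) * prabhakarR α (β - m) γ (t ^ α * z) := by
  obtain ⟨n, rfl⟩ : ∃ n, m = n + 1 := ⟨m - 1, (Nat.succ_pred_eq_of_pos hm).symm⟩
  exact prabhakar_iter α γ z hα n β t ht
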